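/- Let D ≥ 1 be a natural number, σ > 0, α > 1 a real number, and let r_1, …, r_D > 0 be weights with Σ_{d=1}^D r_d = 1. For each d set σ_d² := σ²/(D·r_d). Let a ∈ ℝ^D and t ∈ ℝ^D be arbitrary. Then (α−1)⁻¹·ln ∫_{ℝ^D} (∏_{d=1}^D φ_{a_d,σ_d²}(x_d))^α · (∏_{d=1}^D φ_{a_d+t_d,σ_d²}(x_d))^{1−α} dx = α·D·(Σ_{d=1}^D r_d·t_d²)/(2σ²). -/

import Mathlib

open MeasureTheory Real

/-- Gaussian density with mean `μ` and variance `v`. -/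
noncomputable def gaussPDF (μ v x : ℝ) : ℝ :=
  (Real.sqrt (2 * Real.pi * v))⁻¹ * Real.exp (-(x - μ) ^ 2 / (2 * v))

lemma gaussPDF_pos (μ v x : ℝ) (hv : 0 < v) : 0 < gaussPDF μ v x := by
  have : 0 < Real.sqrt (2 * Real.pi * v) :=
    Real.sqrt_pos.2 (by positivity)
  exact mul_pos (inv_pos.2 this) (Real.exp_pos _)

lemma gauss_integral_one (m v : ℝ) (hv : 0 < v) :
    ∫ x : ℝ, (Real.sqrt (2 * Real.pi * v))⁻¹ * Real.exp (-(x - m) ^ 2 / (2 * v)) = 1 := by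
  have hv' : (2 : ℝ) * v ≠ 0 := by positivity
  have h1 : ∀ x : ℝ, -(x - m) ^ 2 / (2 * v) = -(1/(2*v)) * (x - m) ^ 2 := by
    intro x; field_simp
  simp_rw [h1]
  rw [integral_const_mul]
  rw [integral_sub_right_eq_self (fun x => Real.exp (-(1/(2*v)) * x ^ 2)) m]
  rw [integral_gaussian]
  have : Real.pi / (1/(2*v)) = 2 * Real.pi * v := by field_simp
  rw [this, inv_mul_cancel₀]
  exact ne_of_gt (Real.sqrt_pos.2 (by positivity))

lemma gauss_renyi_1d (a t v α : ℝ) (hv : 0 < v) :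
    ∫ x : ℝ, gaussPDF a v x ^ α * gaussPDF (a + t) v x ^ (1 - α)
      = Real.exp (α * (α - 1) * t ^ 2 / (2 * v)) := by
  set C : ℝ := (Real.sqrt (2 * Real.pi * v))⁻¹ with hC
  have hCpos : 0 < C := inv_pos.2 (Real.sqrt_pos.2 (by positivity))
  have key : ∀ x : ℝ, gaussPDF a v x ^ α * gaussPDF (a + t) v x ^ (1 - α)
      = Real.exp (α * (α - 1) * t ^ 2 / (2 * v)) *
        (C * Real.exp (-(x - (a + (1 - α) * t)) ^ 2 / (2 * v))) := by
    intro x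
    unfold gaussPDF
    rw [Real.mul_rpow hCpos.le (Real.exp_pos _).le,
        Real.mul_rpow hCpos.le (Real.exp_pos _).le,
        ← Real.exp_mul, ← Real.exp_mul]
    have hCC : C ^ α * C ^ (1 - α) = C := by
      rw [← Real.rpow_add hCpos]; simp
    calc C ^ α * Real.exp (-(x - a) ^ 2 / (2 * v) * α) *
          (C ^ (1 - α) * Real.exp (-(x - (a + t)) ^ 2 / (2 * v) * (1 - α)))
        = (C ^ α * C ^ (1 - α)) * (Real.exp (-(x - a) ^ 2 / (2 * v) * α) *
            Real.exp (-(x - (a + t)) ^ 2 / (2 * v) * (1 - α))) := by ring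
      _ = C * Real.exp (-(x - a) ^ 2 / (2 * v) * α + -(x - (a + t)) ^ 2 / (2 * v) * (1 - α)) := by
          rw [hCC, ← Real.exp_add]
      _ = Real.exp (α * (α - 1) * t ^ 2 / (2 * v)) *
            (C * Real.exp (-(x - (a + (1 - α) * t)) ^ 2 / (2 * v))) := by
          have : -(x - a) ^ 2 / (2 * v) * α + -(x - (a + t)) ^ 2 / (2 * v) * (1 - α)
              = α * (α - 1) * t ^ 2 / (2 * v) + -(x - (a + (1 - α) * t)) ^ 2 / (2 * v) := by
            field_simp; ring
          rw [this, Real.exp_add]; ring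
  simp_rw [key]
  rw [integral_const_mul, gauss_integral_one _ _ hv, mul_one]

theorem renyi_nonspherical_gauss_eq (D : ℕ) (hD : 1 ≤ D) (σ α : ℝ) (hσ : 0 < σ) (hα : 1 < α)
    (r : Fin D → ℝ) (a t : Fin D → ℝ)
    (hr : ∀ d, 0 < r d) (hrsum : ∑ d, r d = 1) :
    (α - 1)⁻¹ * Real.log (∫ x : Fin D → ℝ,
        (∏ d, gaussPDF (a d) (σ ^ 2 / (D * r d)) (x d)) ^ α *
        (∏ d, gaussPDF (a d + t d) (σ ^ 2 / (D * r d)) (x d)) ^ (1 - α)) =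
      α * D * (∑ d, r d * t d ^ 2) / (2 * σ ^ 2) := by
  have hD0 : (0 : ℝ) < D := by exact_mod_cast Nat.lt_of_lt_of_le Nat.zero_lt_one hD
  have hv : ∀ d, 0 < σ ^ 2 / (D * r d) := fun d => by
    have := hr d; positivity
  have h1 : ∀ x : Fin D → ℝ,
      (∏ d, gaussPDF (a d) (σ ^ 2 / (D * r d)) (x d)) ^ α *
        (∏ d, gaussPDF (a d + t d) (σ ^ 2 / (D * r d)) (x d)) ^ (1 - α)
      = ∏ d, (gaussPDF (a d) (σ ^ 2 / (D * r d)) (x d) ^ α *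
          gaussPDF (a d + t d) (σ ^ 2 / (D * r d)) (x d) ^ (1 - α)) := by
    intro x
    rw [← Real.finset_prod_rpow _ _ (fun d _ => (gaussPDF_pos _ _ _ (hv d)).le),
        ← Real.finset_prod_rpow _ _ (fun d _ => (gaussPDF_pos _ _ _ (hv d)).le),
        ← Finset.prod_mul_distrib]
  simp_rw [h1]
  rw [volume_pi, integral_fintype_prod_eq_prod (μ := fun _ => volume)
      (f := fun d x => gaussPDF (a d) (σ ^ 2 / (D * r d)) x ^ α *
        gaussPDF (a d + t d) (σ ^ 2 / (D * r d)) x ^ (1 - α))]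
  have h2 : ∀ d ∈ Finset.univ, (∫ x : ℝ, gaussPDF (a d) (σ ^ 2 / (D * r d)) x ^ α *
      gaussPDF (a d + t d) (σ ^ 2 / (D * r d)) x ^ (1 - α))
      = Real.exp (α * (α - 1) * t d ^ 2 / (2 * (σ ^ 2 / (D * r d)))) := fun d _ =>
    gauss_renyi_1d (a d) (t d) _ α (hv d)
  rw [Finset.prod_congr rfl h2, ← Real.exp_sum, Real.log_exp]
  have h3 : ∀ d ∈ Finset.univ, α * (α - 1) * t d ^ 2 / (2 * (σ ^ 2 / (D * r d)))
      = (α - 1) * (α * D * (r d * t d ^ 2) / (2 * σ ^ 2)) := by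
    intro d _
    have := (hr d).ne'
    field_simp
  rw [Finset.sum_congr rfl h3, ← Finset.mul_sum, ← mul_assoc,
    inv_mul_cancel₀ (by linarith : α - 1 ≠ 0), one_mul, ← Finset.sum_div, ← Finset.mul_sum,
    mul_div_assoc]
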